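/- For all integers p, q ≥ 0, the number of signed (p,q)-involutions satisfies α_{p,q} = Σ_{L ∈ 𝒟(p,q)} ω(L), the sum of the weights of all (p,q) Delannoy paths. -/

import Mathlib

/-- A signed `(p,q)`-involution: a pair `(π, ε)` where `π` is an involution of
`{1,…,p+q}` and `ε` assigns a sign (`true` = `+`, `false` = `-`) to each fixed
point of `π` (we normalize `ε` to be `true` on non-fixed points), such that the
number of fixed points with sign `+` minus the number of fixed points with
sign `-` equals `p - q`. -/
def IsSignedInv (p q : ℕ) (x : Equiv.Perm (Fin (p + q)) × (Fin (p + q) → Bool)) : Prop :=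
  x.1 * x.1 = 1 ∧ (∀ i, x.1 i ≠ i → x.2 i = true) ∧
    ((Finset.univ.filter fun i => x.1 i = i ∧ x.2 i = true).card : ℤ) -
      ((Finset.univ.filter fun i => x.1 i = i ∧ x.2 i = false).card : ℤ) = (p : ℤ) - (q : ℤ)

/-- `γ_{k,p,q}`: the number of signed `(p,q)`-involutions whose underlying
involution has exactly `k` two-cycles, i.e. exactly `2k` non-fixed points. -/
noncomputable def gammaCount (k p q : ℕ) : ℕ :=
  Nat.card {x : Equiv.Perm (Fin (p + q)) × (Fin (p + q) → Bool) //
    IsSignedInv p q x ∧ (Finset.univ.filter fun i => x.1 i ≠ i).card = 2 * k}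

/-- `α_{p,q}`: the number of signed `(p,q)`-involutions. -/
noncomputable def alphaCount (p q : ℕ) : ℕ :=
  Nat.card {x : Equiv.Perm (Fin (p + q)) × (Fin (p + q) → Bool) // IsSignedInv p q x}
/-- A step of a lattice path: east `(1,0)`, north `(0,1)`, or diagonal `(1,1)`. -/
inductive DStep : Type
  | E | N | D
deriving DecidableEq

/-- The displacement vector of a step. -/
def stepVec : DStep → ℕ × ℕ
  | .E => (1, 0)
  | .N => (0, 1)
  | .D => (1, 1)

/-- A `(p,q)` Delannoy path: a sequence of steps `E`, `N`, `D` whose total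
displacement from `(0,0)` is `(p,q)`. -/
def IsDelannoy (p q : ℕ) (l : List DStep) : Prop :=
  (l.map stepVec).sum = (p, q)

/-- `D(p,q)`, the number of `(p,q)` Delannoy paths. -/
noncomputable def delannoyNum (p q : ℕ) : ℕ :=
  Nat.card {l : List DStep // IsDelannoy p q l}

/-- The weight of the part of a Delannoy path starting at the given lattice
point: a diagonal step starting at `(a,b)` contributes a factor `a+b+1`,
other steps contribute `1`. -/
def weightFrom : ℕ × ℕ → List DStep → ℕ
  | _, [] => 1
  | ab, s :: t => (if s = DStep.D then ab.1 + ab.2 + 1 else 1) * weightFrom (ab + stepVec s) t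

/-- The weight `ω(L)` of a Delannoy path `L` (starting at the origin): the
product over all diagonal steps going from a point `(a,b)` to `(a+1,b+1)`
of the numbers `a+b+1`. -/
def weight (l : List DStep) : ℕ := weightFrom (0, 0) l

open Equiv Finset


def Cond (n : ℕ) (d : ℤ) (x : Equiv.Perm (Fin n) × (Fin n → Bool)) : Prop :=
  x.1 * x.1 = 1 ∧ (∀ i, x.1 i ≠ i → x.2 i = true) ∧
    ((Finset.univ.filter fun i => x.1 i = i ∧ x.2 i = true).card : ℤ) -
      ((Finset.univ.filter fun i => x.1 i = i ∧ x.2 i = false).card : ℤ) = d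

noncomputable def acount (n : ℕ) (d : ℤ) : ℕ := Nat.card {x // Cond n d x}

/-- extend a permutation of `Fin n` to `Fin (n+1)` fixing the last element -/
def extL {n : ℕ} (σ : Perm (Fin n)) : Perm (Fin (n + 1)) :=
  Equiv.permCongr finSuccEquivLast.symm σ.optionCongr

def resL {n : ℕ} (σ : Perm (Fin (n + 1))) : Perm (Fin n) :=
  Equiv.removeNone (Equiv.permCongr finSuccEquivLast σ)

@[simp] lemma extL_castSucc {n : ℕ} (σ : Perm (Fin n)) (i : Fin n) :
    extL σ i.castSucc = (σ i).castSucc := by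
  simp [extL, Equiv.permCongr_apply]

@[simp] lemma extL_last {n : ℕ} (σ : Perm (Fin n)) :
    extL σ (Fin.last n) = Fin.last n := by
  simp [extL, Equiv.permCongr_apply]

lemma resL_castSucc {n : ℕ} (σ : Perm (Fin (n + 1))) (h : σ (Fin.last n) = Fin.last n) (i : Fin n) :
    (resL σ i).castSucc = σ i.castSucc := by
  have key : (Equiv.permCongr finSuccEquivLast σ) (some i) = some (resL σ i) := by
    rw [resL]
    rcases hv : (Equiv.permCongr finSuccEquivLast σ) (some i) with _ | v
    · exfalso
      simp only [Equiv.permCongr_apply, Equiv.symm_symm] at hv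
      rw [finSuccEquivLast_symm_some] at hv
      have : σ i.castSucc = Fin.last n := by
        have := congrArg finSuccEquivLast.symm hv
        simpa using this
      have := σ.injective (this.trans h.symm)
      exact absurd this (by simp [Fin.ext_iff, Fin.castSucc, Fin.lt_iff_val_lt_val]; omega)
    · rw [Equiv.removeNone_some _ ⟨v, hv⟩, hv]
  simp only [Equiv.permCongr_apply, Equiv.symm_symm, finSuccEquivLast_symm_some] at key
  have := congrArg finSuccEquivLast.symm key
  simpa using this.symm

lemma resL_fix_iff {n : ℕ} (σ : Perm (Fin (n + 1))) (h : σ (Fin.last n) = Fin.last n) (i : Fin n) :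
    resL σ i = i ↔ σ i.castSucc = i.castSucc := by
  rw [← resL_castSucc σ h i]
  exact ⟨fun h' => by rw [h'], fun h' => Fin.castSucc_injective _ h'⟩

lemma resL_extL {n : ℕ} (σ : Perm (Fin n)) : resL (extL σ) = σ := by
  ext i
  have := resL_castSucc (extL σ) (extL_last σ) i
  rw [extL_castSucc] at this
  exact congrArg Fin.val (Fin.castSucc_injective _ this)

lemma extL_resL {n : ℕ} (σ : Perm (Fin (n + 1))) (h : σ (Fin.last n) = Fin.last n) :
    extL (resL σ) = σ := by
  ext i
  induction i using Fin.lastCases with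
  | last => rw [extL_last, h]
  | cast i => rw [extL_castSucc, resL_castSucc σ h]

lemma extL_inv {n : ℕ} (σ : Perm (Fin n)) (h : σ * σ = 1) : extL σ * extL σ = 1 := by
  ext i
  induction i using Fin.lastCases with
  | last => simp [Perm.mul_apply]
  | cast i =>
    simp only [Perm.mul_apply, extL_castSucc, Perm.one_apply]
    have : σ (σ i) = i := by
      rw [← Perm.mul_apply, h, Perm.one_apply]
    rw [this]

lemma resL_inv {n : ℕ} (σ : Perm (Fin (n + 1))) (hl : σ (Fin.last n) = Fin.last n)
    (h : σ * σ = 1) : resL σ * resL σ = 1 := by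
  ext i
  simp only [Perm.mul_apply, Perm.one_apply]
  have h1 : (resL σ (resL σ i)).castSucc = σ (σ i.castSucc) := by
    rw [resL_castSucc σ hl, resL_castSucc σ hl]
  have h2 : σ (σ i.castSucc) = i.castSucc := by
    rw [← Perm.mul_apply, h, Perm.one_apply]
  have h3 := Fin.castSucc_injective _ (h1.trans h2)
  rw [h3]

/-- counting: card of a filter on `Fin (m+1)` splits off the last element -/
lemma card_filter_castSucc {m : ℕ} (Q : Fin (m + 1) → Prop) [DecidablePred Q] :
    (Finset.univ.filter Q).card =
      (Finset.univ.filter (fun i : Fin m => Q i.castSucc)).card + (if Q (Fin.last m) then 1 else 0) := by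
  rw [Finset.card_filter, Finset.card_filter, Fin.sum_univ_castSucc]

lemma card_filter_perm {α : Type*} [Fintype α] [DecidableEq α] (e : Perm α) (Q : α → Prop)
    [DecidablePred Q] :
    (Finset.univ.filter (fun i => Q (e i))).card = (Finset.univ.filter Q).card := by
  apply Finset.card_bij' (fun a _ => e a) (fun b _ => e.symm b) <;> simp

section TwoCycle

variable {n : ℕ}

/-- the reduced involution on `Fin n` obtained by removing the 2-cycle `(Y, last)` -/
def tcd (π : Perm (Fin (n + 2))) (Y : Fin (n + 2)) : Perm (Fin n) :=
  resL (resL (swap Y ((Fin.last n).castSucc) * (swap Y (Fin.last (n + 1)) * π) *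
    swap Y ((Fin.last n).castSucc)))

lemma cs2_ne_cn (j : Fin n) : (j.castSucc.castSucc : Fin (n + 2)) ≠ (Fin.last n).castSucc := by
  simp [Fin.ext_iff]; omega

lemma cs2_ne_last (j : Fin n) : (j.castSucc.castSucc : Fin (n + 2)) ≠ Fin.last (n + 1) := by
  simp [Fin.ext_iff]; omega

lemma cn_ne_last : ((Fin.last n).castSucc : Fin (n + 2)) ≠ Fin.last (n + 1) := by
  simp [Fin.ext_iff]

lemma card_filter_two (Y : Fin (n + 2)) (hY : Y ≠ Fin.last (n + 1)) (Q : Fin (n + 2) → Prop)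
    [DecidablePred Q] (hQY : ¬ Q Y) (hQl : ¬ Q (Fin.last (n + 1))) :
    (Finset.univ.filter Q).card =
      (Finset.univ.filter (fun j : Fin n =>
        Q (swap Y ((Fin.last n).castSucc) j.castSucc.castSucc))).card := by
  rw [← card_filter_perm (swap Y ((Fin.last n).castSucc)) Q]
  rw [card_filter_castSucc (fun i : Fin (n + 2) => Q (swap Y ((Fin.last n).castSucc) i))]
  have hl : swap Y ((Fin.last n).castSucc) (Fin.last (n + 1)) = Fin.last (n + 1) :=
    swap_apply_of_ne_of_ne (Ne.symm hY) (Ne.symm cn_ne_last)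
  rw [hl, if_neg hQl, Nat.add_zero]
  rw [card_filter_castSucc (fun i : Fin (n + 1) => Q (swap Y ((Fin.last n).castSucc) i.castSucc))]
  have hc : swap Y ((Fin.last n).castSucc) ((Fin.last n).castSucc) = Y :=
    swap_apply_right Y ((Fin.last n).castSucc)
  rw [hc, if_neg hQY, Nat.add_zero]

lemma two_cycle_comm (π : Perm (Fin (n + 2))) (Y : Fin (n + 2))
    (h1 : π Y = Fin.last (n + 1)) (h2 : π (Fin.last (n + 1)) = Y) :
    swap Y (Fin.last (n + 1)) * π = π * swap Y (Fin.last (n + 1)) := by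
  have := swap_apply_apply π Y (Fin.last (n + 1))
  rw [h1, h2, swap_comm] at this
  calc swap Y (Fin.last (n + 1)) * π = (π * swap Y (Fin.last (n + 1)) * π⁻¹) * π := by rw [← this]
  _ = π * swap Y (Fin.last (n + 1)) := by group

lemma pi_Y (π : Perm (Fin (n + 2))) (hinv : π * π = 1) (Y : Fin (n + 2))
    (hYlast : π (Fin.last (n + 1)) = Y) : π Y = Fin.last (n + 1) := by
  rw [← hYlast, ← Perm.mul_apply, hinv, Perm.one_apply]

section Core

variable (π : Perm (Fin (n + 2))) (Y : Fin (n + 2))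
  (hinv : π * π = 1) (hYlast : π (Fin.last (n + 1)) = Y) (hY : Y ≠ Fin.last (n + 1))

include hinv hYlast hY

lemma rho_inv : (swap Y ((Fin.last n).castSucc) * (swap Y (Fin.last (n + 1)) * π) * swap Y ((Fin.last n).castSucc)) *
    (swap Y ((Fin.last n).castSucc) * (swap Y (Fin.last (n + 1)) * π) * swap Y ((Fin.last n).castSucc)) = 1 := by
  have hcomm := two_cycle_comm π Y (pi_Y π hinv Y hYlast) hYlast
  have h0 : (swap Y (Fin.last (n + 1)) * π) * (swap Y (Fin.last (n + 1)) * π) = 1 := by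
    calc (swap Y (Fin.last (n + 1)) * π) * (swap Y (Fin.last (n + 1)) * π)
        = swap Y (Fin.last (n + 1)) * (π * swap Y (Fin.last (n + 1))) * π := by group
    _ = swap Y (Fin.last (n + 1)) * (swap Y (Fin.last (n + 1)) * π) * π := by rw [← hcomm]
    _ = (swap Y (Fin.last (n + 1)) * swap Y (Fin.last (n + 1))) * (π * π) := by group
    _ = 1 := by rw [swap_mul_self, hinv, one_mul]
  calc (swap Y ((Fin.last n).castSucc) * (swap Y (Fin.last (n + 1)) * π) * swap Y ((Fin.last n).castSucc)) *
      (swap Y ((Fin.last n).castSucc) * (swap Y (Fin.last (n + 1)) * π) * swap Y ((Fin.last n).castSucc))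
      = swap Y ((Fin.last n).castSucc) * ((swap Y (Fin.last (n + 1)) * π) *
          (swap Y ((Fin.last n).castSucc) * swap Y ((Fin.last n).castSucc)) *
          (swap Y (Fin.last (n + 1)) * π)) * swap Y ((Fin.last n).castSucc) := by group
  _ = swap Y ((Fin.last n).castSucc) * ((swap Y (Fin.last (n + 1)) * π) *
        (swap Y (Fin.last (n + 1)) * π)) * swap Y ((Fin.last n).castSucc) := by
        rw [swap_mul_self, mul_one]
  _ = 1 := by rw [h0, mul_one, swap_mul_self]

lemma rho_last : (swap Y ((Fin.last n).castSucc) * (swap Y (Fin.last (n + 1)) * π) *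
    swap Y ((Fin.last n).castSucc)) (Fin.last (n + 1)) = Fin.last (n + 1) := by
  have hl : swap Y ((Fin.last n).castSucc) (Fin.last (n + 1)) = Fin.last (n + 1) :=
    swap_apply_of_ne_of_ne (Ne.symm hY) (Ne.symm cn_ne_last)
  simp only [Perm.mul_apply]
  rw [hl, hYlast, swap_apply_left, hl]

lemma rho_cn : (swap Y ((Fin.last n).castSucc) * (swap Y (Fin.last (n + 1)) * π) *
    swap Y ((Fin.last n).castSucc)) ((Fin.last n).castSucc) = (Fin.last n).castSucc := by
  simp only [Perm.mul_apply]
  rw [swap_apply_right, pi_Y π hinv Y hYlast, swap_apply_right, swap_apply_left]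

lemma resL_rho_last :
    resL (swap Y ((Fin.last n).castSucc) * (swap Y (Fin.last (n + 1)) * π) *
      swap Y ((Fin.last n).castSucc)) (Fin.last n) = Fin.last n := by
  have := resL_castSucc _ (rho_last π Y hinv hYlast hY) (Fin.last n)
  rw [rho_cn π Y hinv hYlast hY] at this
  exact Fin.castSucc_injective _ this

lemma tcd_cast (j : Fin n) :
    ((tcd π Y j).castSucc.castSucc : Fin (n + 2)) =
      (swap Y ((Fin.last n).castSucc) * (swap Y (Fin.last (n + 1)) * π) *
        swap Y ((Fin.last n).castSucc)) j.castSucc.castSucc := by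
  rw [tcd]
  rw [resL_castSucc _ (resL_rho_last π Y hinv hYlast hY) j,
    resL_castSucc _ (rho_last π Y hinv hYlast hY) j.castSucc]

lemma tcd_fix_iff (j : Fin n) :
    tcd π Y j = j ↔
      π (swap Y ((Fin.last n).castSucc) j.castSucc.castSucc) =
        swap Y ((Fin.last n).castSucc) j.castSucc.castSucc := by
  have hc := tcd_cast π Y hinv hYlast hY j
  have hce_ne_Y : swap Y ((Fin.last n).castSucc) j.castSucc.castSucc ≠ Y := by
    intro h
    have := (swap Y ((Fin.last n).castSucc)).injective
      (h.trans (swap_apply_right Y ((Fin.last n).castSucc)).symm)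
    exact cs2_ne_cn j this
  have hce_ne_last : swap Y ((Fin.last n).castSucc) j.castSucc.castSucc ≠ Fin.last (n + 1) := by
    intro h
    have hl : swap Y ((Fin.last n).castSucc) (Fin.last (n + 1)) = Fin.last (n + 1) :=
      swap_apply_of_ne_of_ne (Ne.symm hY) (Ne.symm cn_ne_last)
    have := (swap Y ((Fin.last n).castSucc)).injective (h.trans hl.symm)
    exact cs2_ne_last j this
  constructor
  · intro h
    have h2 : (swap Y ((Fin.last n).castSucc) * (swap Y (Fin.last (n + 1)) * π) *
        swap Y ((Fin.last n).castSucc)) j.castSucc.castSucc = j.castSucc.castSucc := by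
      rw [← hc, h]
    have h3 : swap Y (Fin.last (n + 1)) (π (swap Y ((Fin.last n).castSucc) j.castSucc.castSucc)) =
        swap Y ((Fin.last n).castSucc) j.castSucc.castSucc := by
      have := congrArg (swap Y ((Fin.last n).castSucc)) h2
      simp only [Perm.mul_apply] at this ⊢
      rwa [swap_apply_self] at this
    have h4 := congrArg (swap Y (Fin.last (n + 1))) h3
    rw [swap_apply_self] at h4
    rw [h4]
    exact swap_apply_of_ne_of_ne hce_ne_Y hce_ne_last
  · intro h
    have h2 : (swap Y ((Fin.last n).castSucc) * (swap Y (Fin.last (n + 1)) * π) *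
        swap Y ((Fin.last n).castSucc)) j.castSucc.castSucc = j.castSucc.castSucc := by
      simp only [Perm.mul_apply]
      rw [h, swap_apply_of_ne_of_ne hce_ne_Y hce_ne_last, swap_apply_self]
    have h5 : ((tcd π Y j).castSucc.castSucc : Fin (n + 2)) = j.castSucc.castSucc := hc.trans h2
    have h6 := congrArg Fin.val h5
    simp only [Fin.coe_castSucc] at h6
    exact Fin.ext h6

lemma tcd_involutive : tcd π Y * tcd π Y = 1 :=
  resL_inv _ (resL_rho_last π Y hinv hYlast hY)
    (resL_inv _ (rho_last π Y hinv hYlast hY) (rho_inv π Y hinv hYlast hY))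

end Core

end TwoCycle

section CondLemmas

variable {n : ℕ}

lemma cond_down {m : ℕ} {d : ℤ} {π : Perm (Fin (m + 1))} {ε : Fin (m + 1) → Bool}
    (h : Cond (m + 1) d (π, ε)) (hl : π (Fin.last m) = Fin.last m) :
    Cond m (d - (if ε (Fin.last m) = true then 1 else -1)) (resL π, fun i => ε i.castSucc) := by
  obtain ⟨hinv, hnorm, hcount⟩ := h
  refine ⟨resL_inv π hl hinv, ?_, ?_⟩
  · intro i hi
    apply hnorm
    intro hfix
    exact hi ((resL_fix_iff π hl i).2 hfix)
  · have ht := card_filter_castSucc (fun i : Fin (m + 1) => π i = i ∧ ε i = true)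
    have hf := card_filter_castSucc (fun i : Fin (m + 1) => π i = i ∧ ε i = false)
    have e1 : (Finset.univ.filter fun i : Fin m => (resL π) i = i ∧ ε i.castSucc = true)
        = (Finset.univ.filter fun i : Fin m => π i.castSucc = i.castSucc ∧ ε i.castSucc = true) := by
      apply Finset.filter_congr; intro i _
      rw [resL_fix_iff π hl]
    have e2 : (Finset.univ.filter fun i : Fin m => (resL π) i = i ∧ ε i.castSucc = false)
        = (Finset.univ.filter fun i : Fin m => π i.castSucc = i.castSucc ∧ ε i.castSucc = false) := by
      apply Finset.filter_congr; intro i _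
      rw [resL_fix_iff π hl]
    simp only at ht hf hcount ⊢
    rw [e1, e2]
    cases hb : ε (Fin.last m) with
    | true =>
      rw [if_pos ⟨hl, hb⟩] at ht
      rw [if_neg (by simp [hb])] at hf
      rw [ht, hf] at hcount
      simp only [if_pos rfl]
      push_cast at hcount ⊢
      omega
    | false =>
      rw [if_neg (by simp [hb])] at ht
      rw [if_pos ⟨hl, hb⟩] at hf
      rw [ht, hf] at hcount
      simp only [Bool.false_eq_true, if_false]
      push_cast at hcount ⊢
      omega

lemma cond_up {m : ℕ} {d : ℤ} {σ : Perm (Fin m)} {ε : Fin m → Bool}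
    (h : Cond m d (σ, ε)) (b : Bool) :
    Cond (m + 1) (d + (if b = true then 1 else -1)) (extL σ, Fin.lastCases b ε) := by
  obtain ⟨hinv, hnorm, hcount⟩ := h
  refine ⟨extL_inv σ hinv, ?_, ?_⟩
  · intro i hi
    induction i using Fin.lastCases with
    | last => simp at hi
    | cast i =>
      rw [extL_castSucc] at hi
      have h2 : σ i ≠ i := fun hc => hi (by rw [hc])
      show Fin.lastCases b ε i.castSucc = true
      rw [Fin.lastCases_castSucc]
      exact hnorm i h2
  · have ht := card_filter_castSucc (fun i : Fin (m + 1) => extL σ i = i ∧ Fin.lastCases b ε i = true)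
    have hf := card_filter_castSucc (fun i : Fin (m + 1) => extL σ i = i ∧ Fin.lastCases b ε i = false)
    have e1 : (Finset.univ.filter fun i : Fin m =>
          extL σ i.castSucc = i.castSucc ∧ Fin.lastCases b ε i.castSucc = true)
        = (Finset.univ.filter fun i : Fin m => σ i = i ∧ ε i = true) := by
      apply Finset.filter_congr; intro i _
      rw [extL_castSucc, Fin.lastCases_castSucc]
      constructor
      · rintro ⟨h1, h2⟩; exact ⟨Fin.castSucc_injective _ h1, h2⟩
      · rintro ⟨h1, h2⟩; exact ⟨by rw [h1], h2⟩
    have e2 : (Finset.univ.filter fun i : Fin m =>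
          extL σ i.castSucc = i.castSucc ∧ Fin.lastCases b ε i.castSucc = false)
        = (Finset.univ.filter fun i : Fin m => σ i = i ∧ ε i = false) := by
      apply Finset.filter_congr; intro i _
      rw [extL_castSucc, Fin.lastCases_castSucc]
      constructor
      · rintro ⟨h1, h2⟩; exact ⟨Fin.castSucc_injective _ h1, h2⟩
      · rintro ⟨h1, h2⟩; exact ⟨by rw [h1], h2⟩
    simp only at ht hf hcount ⊢
    rw [e1] at ht
    rw [e2] at hf
    cases b with
    | true =>
      rw [if_pos ⟨extL_last σ, by rw [Fin.lastCases_last]⟩] at ht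
      rw [if_neg (by rw [Fin.lastCases_last]; simp)] at hf
      rw [ht, hf, if_pos rfl]
      push_cast
      omega
    | false =>
      rw [if_neg (by rw [Fin.lastCases_last]; simp)] at ht
      rw [if_pos ⟨extL_last σ, by rw [Fin.lastCases_last]⟩] at hf
      rw [ht, hf, if_neg (by simp)]
      push_cast
      omega

lemma cond_two_down {d : ℤ} {π : Perm (Fin (n + 2))} {ε : Fin (n + 2) → Bool}
    (h : Cond (n + 2) d (π, ε)) {Y : Fin (n + 2)}
    (hYlast : π (Fin.last (n + 1)) = Y) (hY : Y ≠ Fin.last (n + 1)) :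
    Cond n d (tcd π Y, fun j => ε (swap Y ((Fin.last n).castSucc) j.castSucc.castSucc)) := by
  obtain ⟨hinv, hnorm, hcount⟩ := h
  have hfix := tcd_fix_iff π Y hinv hYlast hY
  have hpiY := pi_Y π hinv Y hYlast
  refine ⟨tcd_involutive π Y hinv hYlast hY, ?_, ?_⟩
  · intro j hj
    apply hnorm
    intro hc
    exact hj ((hfix j).2 hc)
  · have hYne : π Y ≠ Y := by rw [hpiY]; exact Ne.symm hY
    have hlne : π (Fin.last (n + 1)) ≠ Fin.last (n + 1) := by rw [hYlast]; exact hY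
    have ht := card_filter_two Y hY (fun i => π i = i ∧ ε i = true)
      (by simp [hYne]) (by simp [hlne])
    have hf := card_filter_two Y hY (fun i => π i = i ∧ ε i = false)
      (by simp [hYne]) (by simp [hlne])
    have e1 : (Finset.univ.filter fun j : Fin n =>
          π (swap Y ((Fin.last n).castSucc) j.castSucc.castSucc) =
            swap Y ((Fin.last n).castSucc) j.castSucc.castSucc ∧
          ε (swap Y ((Fin.last n).castSucc) j.castSucc.castSucc) = true)
        = (Finset.univ.filter fun j : Fin n => (tcd π Y) j = j ∧
            ε (swap Y ((Fin.last n).castSucc) j.castSucc.castSucc) = true) := by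
      apply Finset.filter_congr; intro j _
      rw [hfix j]
    have e2 : (Finset.univ.filter fun j : Fin n =>
          π (swap Y ((Fin.last n).castSucc) j.castSucc.castSucc) =
            swap Y ((Fin.last n).castSucc) j.castSucc.castSucc ∧
          ε (swap Y ((Fin.last n).castSucc) j.castSucc.castSucc) = false)
        = (Finset.univ.filter fun j : Fin n => (tcd π Y) j = j ∧
            ε (swap Y ((Fin.last n).castSucc) j.castSucc.castSucc) = false) := by
      apply Finset.filter_congr; intro j _
      rw [hfix j]
    simp only at ht hf hcount ⊢
    rw [ht, e1, hf, e2] at hcount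
    exact hcount

end CondLemmas

section Bwd2

variable {n : ℕ}

/-- the permutation part of the inverse map in the 2-cycle case -/
def bwdPerm (y : Fin (n + 1)) (σ : Perm (Fin n)) : Perm (Fin (n + 2)) :=
  swap y.castSucc (Fin.last (n + 1)) *
    (swap y.castSucc ((Fin.last n).castSucc) * extL (extL σ) *
      swap y.castSucc ((Fin.last n).castSucc))

lemma Y_ne_last (y : Fin (n + 1)) : (y.castSucc : Fin (n + 2)) ≠ Fin.last (n + 1) := by
  simp [Fin.ext_iff]; omega

lemma extL2_cn (σ : Perm (Fin n)) :
    extL (extL σ) ((Fin.last n).castSucc : Fin (n + 2)) = (Fin.last n).castSucc := by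
  rw [extL_castSucc, extL_last]

lemma extL2_last (σ : Perm (Fin n)) :
    extL (extL σ) (Fin.last (n + 1)) = Fin.last (n + 1) := extL_last _

lemma X_Y (y : Fin (n + 1)) (σ : Perm (Fin n)) :
    (swap y.castSucc ((Fin.last n).castSucc) * extL (extL σ) *
      swap y.castSucc ((Fin.last n).castSucc)) y.castSucc = y.castSucc := by
  simp only [Perm.mul_apply]
  rw [swap_apply_left, extL2_cn, swap_apply_right]

lemma X_last (y : Fin (n + 1)) (σ : Perm (Fin n)) :
    (swap y.castSucc ((Fin.last n).castSucc) * extL (extL σ) *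
      swap y.castSucc ((Fin.last n).castSucc)) (Fin.last (n + 1)) = Fin.last (n + 1) := by
  have hl : swap (y.castSucc : Fin (n + 2)) ((Fin.last n).castSucc) (Fin.last (n + 1)) =
      Fin.last (n + 1) :=
    swap_apply_of_ne_of_ne (Ne.symm (Y_ne_last y)) (Ne.symm cn_ne_last)
  simp only [Perm.mul_apply]
  rw [hl, extL2_last, hl]

lemma bwdPerm_last (y : Fin (n + 1)) (σ : Perm (Fin n)) :
    bwdPerm y σ (Fin.last (n + 1)) = y.castSucc := by
  rw [bwdPerm]
  simp only [Perm.mul_apply]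
  have := X_last y σ
  simp only [Perm.mul_apply] at this
  rw [this, swap_apply_right]

lemma bwdPerm_comm (y : Fin (n + 1)) (σ : Perm (Fin n)) :
    swap y.castSucc (Fin.last (n + 1)) *
      (swap y.castSucc ((Fin.last n).castSucc) * extL (extL σ) *
        swap y.castSucc ((Fin.last n).castSucc)) =
    (swap y.castSucc ((Fin.last n).castSucc) * extL (extL σ) *
        swap y.castSucc ((Fin.last n).castSucc)) * swap y.castSucc (Fin.last (n + 1)) := by
  set X := swap y.castSucc ((Fin.last n).castSucc) * extL (extL σ) *
    swap (y.castSucc : Fin (n + 2)) ((Fin.last n).castSucc) with hX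
  have h := swap_apply_apply X y.castSucc (Fin.last (n + 1))
  rw [X_Y y σ, X_last y σ] at h
  calc swap (y.castSucc : Fin (n + 2)) (Fin.last (n + 1)) * X
      = (X * swap y.castSucc (Fin.last (n + 1)) * X⁻¹) * X := by rw [← h]
  _ = X * swap y.castSucc (Fin.last (n + 1)) := by group

lemma bwdPerm_inv (y : Fin (n + 1)) (σ : Perm (Fin n)) (hσ : σ * σ = 1) :
    bwdPerm y σ * bwdPerm y σ = 1 := by
  rw [bwdPerm]
  set X := swap y.castSucc ((Fin.last n).castSucc) * extL (extL σ) *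
    swap (y.castSucc : Fin (n + 2)) ((Fin.last n).castSucc) with hX
  have hXX : X * X = 1 := by
    rw [hX]
    have he : extL (extL σ) * extL (extL σ) = 1 := extL_inv _ (extL_inv _ hσ)
    calc (swap y.castSucc ((Fin.last n).castSucc) * extL (extL σ) *
        swap (y.castSucc : Fin (n + 2)) ((Fin.last n).castSucc)) *
        (swap y.castSucc ((Fin.last n).castSucc) * extL (extL σ) *
          swap y.castSucc ((Fin.last n).castSucc))
        = swap y.castSucc ((Fin.last n).castSucc) * (extL (extL σ) *
            (swap y.castSucc ((Fin.last n).castSucc) * swap y.castSucc ((Fin.last n).castSucc)) *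
            extL (extL σ)) * swap y.castSucc ((Fin.last n).castSucc) := by group
    _ = swap y.castSucc ((Fin.last n).castSucc) * (extL (extL σ) * extL (extL σ)) *
          swap y.castSucc ((Fin.last n).castSucc) := by rw [swap_mul_self, mul_one]
    _ = 1 := by rw [he, mul_one, swap_mul_self]
  calc swap y.castSucc (Fin.last (n + 1)) * X * (swap y.castSucc (Fin.last (n + 1)) * X)
      = swap y.castSucc (Fin.last (n + 1)) * (X * swap y.castSucc (Fin.last (n + 1))) * X := by
        group
  _ = swap y.castSucc (Fin.last (n + 1)) * (swap y.castSucc (Fin.last (n + 1)) * X) * X := by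
        rw [← bwdPerm_comm y σ]
  _ = (swap y.castSucc (Fin.last (n + 1)) * swap y.castSucc (Fin.last (n + 1))) * (X * X) := by
        group
  _ = 1 := by rw [swap_mul_self, hXX, one_mul]

lemma bwdPerm_tcd (y : Fin (n + 1)) (σ : Perm (Fin n)) :
    tcd (bwdPerm y σ) y.castSucc = σ := by
  rw [tcd, bwdPerm]
  have h1 : swap (y.castSucc : Fin (n + 2)) (Fin.last (n + 1)) *
      (swap y.castSucc (Fin.last (n + 1)) *
        (swap y.castSucc ((Fin.last n).castSucc) * extL (extL σ) *
          swap y.castSucc ((Fin.last n).castSucc))) =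
      swap y.castSucc ((Fin.last n).castSucc) * extL (extL σ) *
        swap y.castSucc ((Fin.last n).castSucc) := by
    rw [← mul_assoc, swap_mul_self, one_mul]
  rw [h1]
  have h2 : swap (y.castSucc : Fin (n + 2)) ((Fin.last n).castSucc) *
      (swap y.castSucc ((Fin.last n).castSucc) * extL (extL σ) *
        swap y.castSucc ((Fin.last n).castSucc)) *
      swap y.castSucc ((Fin.last n).castSucc) = extL (extL σ) := by
    simp [mul_assoc, Equiv.swap_mul_self_mul, Equiv.swap_mul_self, mul_one]
  rw [h2, resL_extL, resL_extL]

end Bwd2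

section Bwd2Eps

variable {n : ℕ}

def bwdEps (y : Fin (n + 1)) (σ : Perm (Fin n)) (ε₀ : Fin n → Bool) : Fin (n + 2) → Bool :=
  fun i => if bwdPerm y σ i = i then
    (if h : ((swap (y.castSucc : Fin (n + 2)) ((Fin.last n).castSucc) i : Fin (n + 2)) : ℕ) < n
      then ε₀ ⟨_, h⟩ else true) else true

lemma swap_cs2_val (y : Fin (n + 1)) (j : Fin n) :
    ((swap (y.castSucc : Fin (n + 2)) ((Fin.last n).castSucc)
      (swap (y.castSucc : Fin (n + 2)) ((Fin.last n).castSucc) j.castSucc.castSucc) : Fin (n + 2)) : ℕ)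
      = (j : ℕ) := by
  rw [swap_apply_self]
  simp

lemma bwd_fix_iff (y : Fin (n + 1)) (σ : Perm (Fin n)) (hσ : σ * σ = 1) (j : Fin n) :
    bwdPerm y σ (swap (y.castSucc : Fin (n + 2)) ((Fin.last n).castSucc) j.castSucc.castSucc) =
      swap (y.castSucc : Fin (n + 2)) ((Fin.last n).castSucc) j.castSucc.castSucc ↔ σ j = j := by
  have h := tcd_fix_iff (bwdPerm y σ) y.castSucc (bwdPerm_inv y σ hσ) (bwdPerm_last y σ)
    (Y_ne_last y) j
  rw [bwdPerm_tcd] at h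
  exact h.symm

lemma bwdEps_g (y : Fin (n + 1)) (σ : Perm (Fin n)) (hσ : σ * σ = 1) (ε₀ : Fin n → Bool)
    (j : Fin n) :
    bwdEps y σ ε₀ (swap (y.castSucc : Fin (n + 2)) ((Fin.last n).castSucc) j.castSucc.castSucc) =
      if σ j = j then ε₀ j else true := by
  rw [bwdEps]
  by_cases hj : σ j = j
  · rw [if_pos ((bwd_fix_iff y σ hσ j).2 hj), if_pos hj]
    have hlt : ((swap (y.castSucc : Fin (n + 2)) ((Fin.last n).castSucc)
        (swap (y.castSucc : Fin (n + 2)) ((Fin.last n).castSucc) j.castSucc.castSucc) : Fin (n + 2)) : ℕ) < n := by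
      rw [swap_cs2_val]; exact j.isLt
    rw [dif_pos hlt]
    congr 1
    exact Fin.ext (swap_cs2_val y j)
  · rw [if_neg (fun hc => hj ((bwd_fix_iff y σ hσ j).1 hc)), if_neg hj]

lemma cond_two_up {d : ℤ} (y : Fin (n + 1)) {σ : Perm (Fin n)} {ε₀ : Fin n → Bool}
    (h : Cond n d (σ, ε₀)) :
    Cond (n + 2) d (bwdPerm y σ, bwdEps y σ ε₀) := by
  obtain ⟨hinv, hnorm, hcount⟩ := h
  simp only at hinv hnorm hcount
  have hpinv := bwdPerm_inv y σ hinv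
  have hplast := bwdPerm_last y σ
  have hpY : bwdPerm y σ y.castSucc = Fin.last (n + 1) := pi_Y _ hpinv _ hplast
  refine ⟨hpinv, ?_, ?_⟩
  · intro i hi
    simp only [bwdEps]
    rw [if_neg hi]
  · have hQY : ∀ b : Bool, ¬ (bwdPerm y σ y.castSucc = y.castSucc ∧ bwdEps y σ ε₀ y.castSucc = b) := by
      intro b hc
      rw [hpY] at hc
      exact (Y_ne_last y) hc.1.symm
    have hQl : ∀ b : Bool, ¬ (bwdPerm y σ (Fin.last (n + 1)) = Fin.last (n + 1) ∧
        bwdEps y σ ε₀ (Fin.last (n + 1)) = b) := by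
      intro b hc
      rw [hplast] at hc
      exact (Y_ne_last y) hc.1
    have ht := card_filter_two y.castSucc (Y_ne_last y)
      (fun i => bwdPerm y σ i = i ∧ bwdEps y σ ε₀ i = true) (hQY true) (hQl true)
    have hf := card_filter_two y.castSucc (Y_ne_last y)
      (fun i => bwdPerm y σ i = i ∧ bwdEps y σ ε₀ i = false) (hQY false) (hQl false)
    have e1 : (Finset.univ.filter fun j : Fin n =>
        bwdPerm y σ (swap (y.castSucc : Fin (n + 2)) ((Fin.last n).castSucc) j.castSucc.castSucc) =
          swap (y.castSucc : Fin (n + 2)) ((Fin.last n).castSucc) j.castSucc.castSucc ∧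
        bwdEps y σ ε₀ (swap (y.castSucc : Fin (n + 2)) ((Fin.last n).castSucc) j.castSucc.castSucc) = true)
        = (Finset.univ.filter fun j : Fin n => σ j = j ∧ ε₀ j = true) := by
      apply Finset.filter_congr; intro j _
      rw [bwd_fix_iff y σ hinv j, bwdEps_g y σ hinv ε₀ j]
      by_cases hj : σ j = j
      · rw [if_pos hj]
      · rw [if_neg hj]; simp [hj]
    have e2 : (Finset.univ.filter fun j : Fin n =>
        bwdPerm y σ (swap (y.castSucc : Fin (n + 2)) ((Fin.last n).castSucc) j.castSucc.castSucc) =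
          swap (y.castSucc : Fin (n + 2)) ((Fin.last n).castSucc) j.castSucc.castSucc ∧
        bwdEps y σ ε₀ (swap (y.castSucc : Fin (n + 2)) ((Fin.last n).castSucc) j.castSucc.castSucc) = false)
        = (Finset.univ.filter fun j : Fin n => σ j = j ∧ ε₀ j = false) := by
      apply Finset.filter_congr; intro j _
      rw [bwd_fix_iff y σ hinv j, bwdEps_g y σ hinv ε₀ j]
      by_cases hj : σ j = j
      · rw [if_pos hj]
      · rw [if_neg hj]; simp [hj]
    simp only at ht hf ⊢
    rw [ht, hf, e1, e2]
    exact hcount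

end Bwd2Eps

section MainEquiv

variable {n : ℕ}

lemma lastCases_eps {m : ℕ} (ε : Fin (m + 1) → Bool) :
    (Fin.lastCases (ε (Fin.last m)) (fun i => ε i.castSucc) : ∀ _ : Fin (m + 1), Bool) = ε := by
  funext i
  induction i using Fin.lastCases with
  | last => rw [Fin.lastCases_last]
  | cast i => rw [Fin.lastCases_castSucc]

lemma bwdPerm_roundtrip (π : Perm (Fin (n + 2))) (hinv : π * π = 1)
    (h : π (Fin.last (n + 1)) ≠ Fin.last (n + 1)) :
    bwdPerm ((π (Fin.last (n + 1))).castPred h) (tcd π (π (Fin.last (n + 1)))) = π := by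
  have hYcs : ((π (Fin.last (n + 1))).castPred h).castSucc = π (Fin.last (n + 1)) :=
    Fin.castSucc_castPred _ _
  rw [bwdPerm, hYcs]
  have e : extL (extL (tcd π (π (Fin.last (n + 1))))) =
      swap (π (Fin.last (n + 1))) ((Fin.last n).castSucc) *
        (swap (π (Fin.last (n + 1))) (Fin.last (n + 1)) * π) *
        swap (π (Fin.last (n + 1))) ((Fin.last n).castSucc) := by
    rw [tcd, extL_resL _ (resL_rho_last π _ hinv rfl h), extL_resL _ (rho_last π _ hinv rfl h)]
  rw [e]
  simp [mul_assoc, Equiv.swap_mul_self, Equiv.swap_mul_self_mul, mul_one]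

lemma val_lt_of_ne (v : Fin (n + 2)) (h1 : v ≠ (Fin.last n).castSucc) (h2 : v ≠ Fin.last (n + 1)) :
    (v : ℕ) < n := by
  have h3 := v.isLt
  rw [Ne, Fin.ext_iff] at h1 h2
  simp only [Fin.coe_castSucc, Fin.val_last] at h1 h2
  omega

lemma bwdEps_roundtrip (π : Perm (Fin (n + 2))) (ε : Fin (n + 2) → Bool) (hinv : π * π = 1)
    (hnorm : ∀ i, π i ≠ i → ε i = true) (h : π (Fin.last (n + 1)) ≠ Fin.last (n + 1)) :
    bwdEps ((π (Fin.last (n + 1))).castPred h) (tcd π (π (Fin.last (n + 1))))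
      (fun j => ε (swap (π (Fin.last (n + 1))) ((Fin.last n).castSucc) j.castSucc.castSucc)) = ε := by
  have hYcs : ((π (Fin.last (n + 1))).castPred h).castSucc = π (Fin.last (n + 1)) :=
    Fin.castSucc_castPred _ _
  have hpY : π (π (Fin.last (n + 1))) = Fin.last (n + 1) := pi_Y π hinv _ rfl
  funext i
  show (if bwdPerm _ _ i = i then _ else true) = ε i
  rw [bwdPerm_roundtrip π hinv h]
  by_cases hfix : π i = i
  · rw [if_pos hfix]
    have hiY : i ≠ π (Fin.last (n + 1)) := by
      intro hc
      rw [hc] at hfix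
      rw [hpY] at hfix
      exact h hfix.symm
    have hil : i ≠ Fin.last (n + 1) := by
      intro hc
      rw [hc] at hfix
      exact h hfix
    have hci_cn : swap (π (Fin.last (n + 1))) ((Fin.last n).castSucc) i ≠ (Fin.last n).castSucc := by
      intro hc
      have := (swap (π (Fin.last (n + 1))) ((Fin.last n).castSucc)).injective
        (hc.trans (swap_apply_left _ _).symm)
      exact hiY this
    have hci_l : swap (π (Fin.last (n + 1))) ((Fin.last n).castSucc) i ≠ Fin.last (n + 1) := by
      intro hc
      have hl : swap (π (Fin.last (n + 1))) ((Fin.last n).castSucc) (Fin.last (n + 1)) =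
          Fin.last (n + 1) :=
        swap_apply_of_ne_of_ne (Ne.symm h) (Ne.symm cn_ne_last)
      have := (swap (π (Fin.last (n + 1))) ((Fin.last n).castSucc)).injective (hc.trans hl.symm)
      exact hil this
    have hlt : ((swap (((π (Fin.last (n + 1))).castPred h).castSucc : Fin (n + 2))
        ((Fin.last n).castSucc) i : Fin (n + 2)) : ℕ) < n := by
      rw [hYcs]
      exact val_lt_of_ne _ hci_cn hci_l
    rw [dif_pos hlt]
    have hcast : ((⟨_, hlt⟩ : Fin n).castSucc.castSucc : Fin (n + 2)) =
        swap (π (Fin.last (n + 1))) ((Fin.last n).castSucc) i := by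
      apply Fin.ext
      simp [hYcs]
    simp only [hcast, swap_apply_self]
  · rw [if_neg hfix]
    exact (hnorm i hfix).symm

noncomputable def mainEquiv (n : ℕ) (d : ℤ) :
    {x : Perm (Fin (n + 2)) × (Fin (n + 2) → Bool) // Cond (n + 2) d x} ≃
    ({x : Perm (Fin (n + 1)) × (Fin (n + 1) → Bool) // Cond (n + 1) (d - 1) x} ⊕
     ({x : Perm (Fin (n + 1)) × (Fin (n + 1) → Bool) // Cond (n + 1) (d + 1) x} ⊕
      (Fin (n + 1) × {x : Perm (Fin n) × (Fin n → Bool) // Cond n d x}))) where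
  toFun x :=
    if h : x.val.1 (Fin.last (n + 1)) = Fin.last (n + 1) then
      if hb : x.val.2 (Fin.last (n + 1)) = true then
        Sum.inl ⟨(resL x.val.1, fun i => x.val.2 i.castSucc), by
          have := cond_down x.2 h
          rw [hb] at this
          simpa using this⟩
      else
        Sum.inr (Sum.inl ⟨(resL x.val.1, fun i => x.val.2 i.castSucc), by
          have := cond_down x.2 h
          rw [Bool.not_eq_true] at hb
          rw [hb] at this
          simpa using this⟩)
    else
      Sum.inr (Sum.inr ((x.val.1 (Fin.last (n + 1))).castPred h,
        ⟨(tcd x.val.1 (x.val.1 (Fin.last (n + 1))),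
          fun j => x.val.2 (swap (x.val.1 (Fin.last (n + 1))) ((Fin.last n).castSucc)
            j.castSucc.castSucc)),
          cond_two_down x.2 rfl h⟩))
  invFun z :=
    match z with
    | Sum.inl z => ⟨(extL z.val.1, Fin.lastCases true z.val.2), by
        have := cond_up z.2 true
        simpa using this⟩
    | Sum.inr (Sum.inl z) => ⟨(extL z.val.1, Fin.lastCases false z.val.2), by
        have := cond_up z.2 false
        simpa using this⟩
    | Sum.inr (Sum.inr (y, z)) => ⟨(bwdPerm y z.val.1, bwdEps y z.val.1 z.val.2),
        cond_two_up y z.2⟩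
  left_inv := by
    rintro ⟨⟨π, ε⟩, hc⟩
    obtain ⟨hinv, hnorm, hcount⟩ := hc
    simp only at hinv hnorm
    by_cases h : π (Fin.last (n + 1)) = Fin.last (n + 1)
    · by_cases hb : ε (Fin.last (n + 1)) = true
      · apply Subtype.ext
        simp only [dif_pos h, dif_pos hb]
        show (extL (resL π), fun i => (Fin.lastCases true (fun i => ε i.castSucc) :
          ∀ _ : Fin (n + 2), Bool) i) = (π, ε)
        have he : (fun i => (Fin.lastCases true (fun i => ε i.castSucc) :
            ∀ _ : Fin (n + 2), Bool) i) = ε := by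
          rw [← hb]
          funext i
          exact congrFun (lastCases_eps ε) i
        rw [extL_resL π h, he]
      · apply Subtype.ext
        simp only [dif_pos h, dif_neg hb]
        show (extL (resL π), fun i => (Fin.lastCases false (fun i => ε i.castSucc) :
          ∀ _ : Fin (n + 2), Bool) i) = (π, ε)
        rw [Bool.not_eq_true] at hb
        have he : (fun i => (Fin.lastCases false (fun i => ε i.castSucc) :
            ∀ _ : Fin (n + 2), Bool) i) = ε := by
          rw [← hb]
          funext i
          exact congrFun (lastCases_eps ε) i
        rw [extL_resL π h, he]
    · apply Subtype.ext
      simp only [dif_neg h]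
      show (bwdPerm _ _, bwdEps _ _ _) = (π, ε)
      rw [bwdPerm_roundtrip π hinv h, bwdEps_roundtrip π ε hinv hnorm h]
  right_inv := by
    rintro (⟨⟨σ, ε⟩, hc⟩ | ⟨⟨σ, ε⟩, hc⟩ | ⟨y, ⟨⟨σ, ε⟩, hc⟩⟩)
    · have hb : (fun i => (Fin.lastCases true ε : ∀ _ : Fin (n + 2), Bool) i)
          (Fin.last (n + 1)) = true := by simp
      simp only [dif_pos (extL_last σ), dif_pos hb]
      apply congrArg Sum.inl
      apply Subtype.ext
      show (resL (extL σ), fun i => (Fin.lastCases true ε : ∀ _ : Fin (n + 2), Bool) i.castSucc)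
        = (σ, ε)
      rw [resL_extL]
      congr 1
      funext i
      simp
    · have hb : ¬ (fun i => (Fin.lastCases false ε : ∀ _ : Fin (n + 2), Bool) i)
          (Fin.last (n + 1)) = true := by simp
      simp only [dif_pos (extL_last σ), dif_neg hb]
      apply congrArg (fun t => Sum.inr (Sum.inl t))
      apply Subtype.ext
      show (resL (extL σ), fun i => (Fin.lastCases false ε : ∀ _ : Fin (n + 2), Bool) i.castSucc)
        = (σ, ε)
      rw [resL_extL]
      congr 1
      funext i
      simp
    · have hne : ¬ bwdPerm y σ (Fin.last (n + 1)) = Fin.last (n + 1) := by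
        rw [bwdPerm_last]; exact Y_ne_last y
      simp only [dif_neg hne]
      have heps : (fun j => bwdEps y σ ε
          (swap (bwdPerm y σ (Fin.last (n + 1))) ((Fin.last n).castSucc) j.castSucc.castSucc)) = ε := by
        funext j
        rw [bwdPerm_last]
        rw [bwdEps_g y σ hc.1 ε j]
        by_cases hj : σ j = j
        · rw [if_pos hj]
        · rw [if_neg hj]
          exact (hc.2.1 j hj).symm
      simp only [bwdPerm_last, Fin.castPred_castSucc, bwdPerm_tcd]
      simp only [bwdPerm_last] at heps
      refine congrArg (fun t => Sum.inr (Sum.inr (y, t))) (Subtype.ext ?_)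
      show ((σ, fun j => bwdEps y σ ε
        ((swap y.castSucc (Fin.last n).castSucc) j.castSucc.castSucc)) :
          Perm (Fin n) × (Fin n → Bool)) = (σ, ε)
      rw [heps]

lemma acount_rec (n : ℕ) (d : ℤ) :
    acount (n + 2) d = acount (n + 1) (d - 1) + acount (n + 1) (d + 1) + (n + 1) * acount n d := by
  rw [acount, Nat.card_congr (mainEquiv n d), Nat.card_sum, Nat.card_sum, Nat.card_prod,
    Nat.card_eq_fintype_card (α := Fin (n + 1)), Fintype.card_fin]
  simp only [acount]
  ring

lemma acount_base_pos (m : ℕ) : acount m (m : ℤ) = 1 := by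
  rw [acount, Nat.card_eq_one_iff_exists]
  have hx : Cond m (m : ℤ) ((1 : Perm (Fin m)), fun _ => true) := by
    refine ⟨one_mul 1, fun i hi => absurd rfl hi, ?_⟩
    have h1 : (Finset.univ.filter fun i : Fin m =>
        (1 : Perm (Fin m)) i = i ∧ (fun _ : Fin m => true) i = true) = Finset.univ := by
      apply Finset.eq_univ_of_forall
      intro i
      simp
    have h2 : (Finset.univ.filter fun i : Fin m =>
        (1 : Perm (Fin m)) i = i ∧ (fun _ : Fin m => true) i = false) = ∅ := by
      apply Finset.eq_empty_of_forall_notMem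
      intro i
      simp
    rw [h1, h2]
    simp
  refine ⟨⟨((1 : Perm (Fin m)), fun _ => true), hx⟩, ?_⟩
  rintro ⟨⟨π, ε⟩, hinv, hnorm, hcount⟩
  simp only at hinv hnorm hcount
  have hA : (Finset.univ.filter fun i : Fin m => π i = i ∧ ε i = true).card ≤ m := by
    calc (Finset.univ.filter fun i : Fin m => π i = i ∧ ε i = true).card
        ≤ Finset.univ.card := Finset.card_filter_le _ _
    _ = m := by rw [Finset.card_univ, Fintype.card_fin]
  have hAm : (Finset.univ.filter fun i : Fin m => π i = i ∧ ε i = true).card = m := by omega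
  have huniv : (Finset.univ.filter fun i : Fin m => π i = i ∧ ε i = true) = Finset.univ := by
    apply Finset.eq_univ_of_card
    rw [hAm, Fintype.card_fin]
  have hall : ∀ i : Fin m, π i = i ∧ ε i = true := by
    intro i
    have : i ∈ Finset.univ.filter fun i : Fin m => π i = i ∧ ε i = true := by
      rw [huniv]; exact Finset.mem_univ i
    simpa using this
  apply Subtype.ext
  show (π, ε) = ((1 : Perm (Fin m)), fun _ => true)
  have hπ : π = 1 := Equiv.ext fun i => (hall i).1
  have hε : ε = fun _ => true := funext fun i => (hall i).2
  rw [hπ, hε]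

lemma acount_base_neg (m : ℕ) : acount m (-(m : ℤ)) = 1 := by
  rw [acount, Nat.card_eq_one_iff_exists]
  have hx : Cond m (-(m : ℤ)) ((1 : Perm (Fin m)), fun _ => false) := by
    refine ⟨one_mul 1, fun i hi => absurd rfl hi, ?_⟩
    have h1 : (Finset.univ.filter fun i : Fin m =>
        (1 : Perm (Fin m)) i = i ∧ (fun _ : Fin m => false) i = true) = ∅ := by
      apply Finset.eq_empty_of_forall_notMem
      intro i
      simp
    have h2 : (Finset.univ.filter fun i : Fin m =>
        (1 : Perm (Fin m)) i = i ∧ (fun _ : Fin m => false) i = false) = Finset.univ := by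
      apply Finset.eq_univ_of_forall
      intro i
      simp
    rw [h1, h2]
    simp
  refine ⟨⟨((1 : Perm (Fin m)), fun _ => false), hx⟩, ?_⟩
  rintro ⟨⟨π, ε⟩, hinv, hnorm, hcount⟩
  simp only at hinv hnorm hcount
  have hB : (Finset.univ.filter fun i : Fin m => π i = i ∧ ε i = false).card ≤ m := by
    calc (Finset.univ.filter fun i : Fin m => π i = i ∧ ε i = false).card
        ≤ Finset.univ.card := Finset.card_filter_le _ _
    _ = m := by rw [Finset.card_univ, Fintype.card_fin]
  have hBm : (Finset.univ.filter fun i : Fin m => π i = i ∧ ε i = false).card = m := by omega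
  have huniv : (Finset.univ.filter fun i : Fin m => π i = i ∧ ε i = false) = Finset.univ := by
    apply Finset.eq_univ_of_card
    rw [hBm, Fintype.card_fin]
  have hall : ∀ i : Fin m, π i = i ∧ ε i = false := by
    intro i
    have : i ∈ Finset.univ.filter fun i : Fin m => π i = i ∧ ε i = false := by
      rw [huniv]; exact Finset.mem_univ i
    simpa using this
  apply Subtype.ext
  show (π, ε) = ((1 : Perm (Fin m)), fun _ => false)
  have hπ : π = 1 := Equiv.ext fun i => (hall i).1
  have hε : ε = fun _ => false := funext fun i => (hall i).2
  rw [hπ, hε]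

instance : Fintype DStep := ⟨{.E, .N, .D}, by intro x; cases x <;> simp⟩

lemma delannoy_length_le : ∀ (l : List DStep) (p q : ℕ), IsDelannoy p q l → l.length ≤ p + q := by
  intro l
  induction l with
  | nil => intro p q _; simp
  | cons s t ih =>
    intro p q h
    unfold IsDelannoy at h
    simp only [List.map_cons, List.sum_cons] at h
    have h1 := congrArg Prod.fst h
    have h2 := congrArg Prod.snd h
    simp only [Prod.fst_add, Prod.snd_add] at h1 h2
    have ht : IsDelannoy ((t.map stepVec).sum).1 ((t.map stepVec).sum).2 t := by
      unfold IsDelannoy; exact Prod.mk.eta.symm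
    have := ih _ _ ht
    have hs : 1 ≤ (stepVec s).1 + (stepVec s).2 := by cases s <;> simp [stepVec]
    simp only [List.length_cons]
    omega

lemma delannoy_finite (p q : ℕ) : {l : List DStep | IsDelannoy p q l}.Finite :=
  Set.Finite.subset (List.finite_length_le DStep (p + q)) (fun l hl => delannoy_length_le l p q hl)

noncomputable def Dset (p q : ℕ) : Finset (List DStep) := (delannoy_finite p q).toFinset

lemma mem_Dset {p q : ℕ} {l : List DStep} : l ∈ Dset p q ↔ IsDelannoy p q l := by
  simp [Dset, Set.Finite.mem_toFinset]

noncomputable def W (p q : ℕ) : ℕ := ∑ l ∈ Dset p q, weight l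

lemma weightFrom_append (l : List DStep) : ∀ (ab : ℕ × ℕ) (s : DStep),
    weightFrom ab (l ++ [s]) = weightFrom ab l *
      (if s = DStep.D then ab.1 + ab.2 + ((l.map stepVec).sum).1 + ((l.map stepVec).sum).2 + 1 else 1) := by
  induction l with
  | nil => intro ab s; simp [weightFrom]
  | cons hd tl ih =>
    intro ab s
    have e1 : (hd :: tl) ++ [s] = hd :: (tl ++ [s]) := rfl
    rw [e1]
    show (if hd = DStep.D then ab.1 + ab.2 + 1 else 1) * weightFrom (ab + stepVec hd) (tl ++ [s]) = _
    rw [ih]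
    show _ = (if hd = DStep.D then ab.1 + ab.2 + 1 else 1) * weightFrom (ab + stepVec hd) tl *
      (if s = DStep.D then ab.1 + ab.2 + (((hd :: tl).map stepVec).sum).1 + (((hd :: tl).map stepVec).sum).2 + 1 else 1)
    rw [mul_assoc]
    congr 1
    have hv : (ab + stepVec hd).1 + (ab + stepVec hd).2 + (List.map stepVec tl).sum.1 + (List.map stepVec tl).sum.2
        = ab.1 + ab.2 + (((hd :: tl).map stepVec).sum).1 + (((hd :: tl).map stepVec).sum).2 := by
      simp [Prod.fst_add, Prod.snd_add]; ring
    rw [hv]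

lemma weight_append_E {l : List DStep} :
    weight (l ++ [DStep.E]) = weight l := by
  unfold weight; rw [weightFrom_append]; simp

lemma weight_append_N {l : List DStep} :
    weight (l ++ [DStep.N]) = weight l := by
  unfold weight; rw [weightFrom_append]; simp

lemma weight_append_D {p q : ℕ} {l : List DStep} (h : IsDelannoy p q l) :
    weight (l ++ [DStep.D]) = weight l * (p + q + 1) := by
  unfold weight; rw [weightFrom_append]
  unfold IsDelannoy at h
  rw [h]; simp

lemma isDelannoy_append {p q : ℕ} {l : List DStep} {s : DStep} :
    IsDelannoy p q (l ++ [s]) ↔ (l.map stepVec).sum + stepVec s = (p, q) := by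
  unfold IsDelannoy; simp

lemma Dset_succ_succ (p q : ℕ) :
    Dset (p + 1) (q + 1) = ((Dset p (q + 1)).image (· ++ [DStep.E]) ∪
      (Dset (p + 1) q).image (· ++ [DStep.N])) ∪ (Dset p q).image (· ++ [DStep.D]) := by
  ext l
  simp only [Finset.mem_union, Finset.mem_image, mem_Dset]
  constructor
  · intro hl
    rcases l.eq_nil_or_concat' with rfl | ⟨t, s, rfl⟩
    · exfalso; unfold IsDelannoy at hl
      simp only [List.map_nil, List.sum_nil] at hl
      have := congrArg Prod.fst hl
      simp at this
    · rw [isDelannoy_append] at hl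
      have h1 := congrArg Prod.fst hl
      have h2 := congrArg Prod.snd hl
      simp only [Prod.fst_add, Prod.snd_add] at h1 h2
      cases s with
      | E =>
        left; left
        exact ⟨t, by unfold IsDelannoy; simp [stepVec] at h1 h2 ⊢; exact Prod.ext h1 h2, rfl⟩
      | N =>
        left; right
        exact ⟨t, by unfold IsDelannoy; simp [stepVec] at h1 h2 ⊢; exact Prod.ext h1 h2, rfl⟩
      | D =>
        right
        exact ⟨t, by unfold IsDelannoy; simp [stepVec] at h1 h2 ⊢; exact Prod.ext (by omega) (by omega), rfl⟩
  · rintro ((⟨t, ht, rfl⟩ | ⟨t, ht, rfl⟩) | ⟨t, ht, rfl⟩) <;>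
      · rw [isDelannoy_append, ht]; simp [stepVec, Prod.ext_iff]

lemma W_rec (p q : ℕ) : W (p + 1) (q + 1) = W p (q + 1) + W (p + 1) q + (p + q + 1) * W p q := by
  unfold W
  rw [Dset_succ_succ]
  have hinj : ∀ s : DStep, Function.Injective (· ++ [s] : List DStep → List DStep) :=
    fun s => List.append_left_injective [s]
  have d1 : Disjoint ((Dset p (q + 1)).image (· ++ [DStep.E])) ((Dset (p + 1) q).image (· ++ [DStep.N])) := by
    rw [Finset.disjoint_left]
    rintro a ha hb
    simp only [Finset.mem_image] at ha hb
    obtain ⟨t, _, rfl⟩ := ha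
    obtain ⟨u, _, he⟩ := hb
    have := congrArg List.getLast? he
    simp only [List.getLast?_concat] at this
    exact absurd this (by simp)
  have d2 : Disjoint (((Dset p (q + 1)).image (· ++ [DStep.E])) ∪ ((Dset (p + 1) q).image (· ++ [DStep.N])))
      ((Dset p q).image (· ++ [DStep.D])) := by
    rw [Finset.disjoint_left]
    rintro a ha hb
    simp only [Finset.mem_union, Finset.mem_image] at ha hb
    obtain ⟨u, _, he⟩ := hb
    rcases ha with ⟨t, _, rfl⟩ | ⟨t, _, rfl⟩ <;>
    · have := congrArg List.getLast? he
      simp only [List.getLast?_concat] at this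
      exact absurd this (by simp)
  rw [Finset.sum_union d2, Finset.sum_union d1]
  rw [Finset.sum_image (fun a _ b _ h => hinj _ h), Finset.sum_image (fun a _ b _ h => hinj _ h),
    Finset.sum_image (fun a _ b _ h => hinj _ h)]
  have e1 : ∑ t ∈ Dset p (q+1), weight (t ++ [DStep.E]) = ∑ t ∈ Dset p (q+1), weight t :=
    Finset.sum_congr rfl (fun t _ => weight_append_E)
  have e2 : ∑ t ∈ Dset (p+1) q, weight (t ++ [DStep.N]) = ∑ t ∈ Dset (p+1) q, weight t :=
    Finset.sum_congr rfl (fun t _ => weight_append_N)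
  have e3 : ∑ t ∈ Dset p q, weight (t ++ [DStep.D]) = (p + q + 1) * ∑ t ∈ Dset p q, weight t := by
    rw [Finset.mul_sum]
    exact Finset.sum_congr rfl (fun t ht => by
      rw [weight_append_D (mem_Dset.1 ht)]; ring)
  rw [e1, e2, e3]

lemma delannoy_p0 {p : ℕ} {l : List DStep} : IsDelannoy p 0 l ↔ l = List.replicate p DStep.E := by
  constructor
  · intro h
    induction l generalizing p with
    | nil =>
      unfold IsDelannoy at h
      simp only [List.map_nil, List.sum_nil] at h
      have := congrArg Prod.fst h
      simp at this
      simp [← this]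
    | cons s t ih =>
      unfold IsDelannoy at h
      simp only [List.map_cons, List.sum_cons] at h
      have h1 := congrArg Prod.fst h
      have h2 := congrArg Prod.snd h
      simp only [Prod.fst_add, Prod.snd_add] at h1 h2
      cases s with
      | E =>
        simp only [stepVec] at h1 h2
        have hz : ((t.map stepVec).sum).2 = 0 := by omega
        have ht : IsDelannoy ((t.map stepVec).sum).1 0 t := by
          unfold IsDelannoy; rw [← hz]
        have h4 := ih ht
        rw [h4]
        have h5 : p = ((t.map stepVec).sum).1 + 1 := by omega
        rw [h5, List.replicate_succ]
      | N => simp [stepVec] at h2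
      | D => simp [stepVec] at h2
  · rintro rfl
    induction p with
    | zero => unfold IsDelannoy; simp; rfl
    | succ n ih =>
      unfold IsDelannoy at ih ⊢
      simp only [List.replicate_succ, List.map_cons, List.sum_cons, ih]
      simp only [stepVec, Prod.ext_iff, Prod.fst_add, Prod.snd_add]
      constructor <;> simp [Nat.add_comm]

lemma delannoy_0q {q : ℕ} {l : List DStep} : IsDelannoy 0 q l ↔ l = List.replicate q DStep.N := by
  constructor
  · intro h
    induction l generalizing q with
    | nil =>
      unfold IsDelannoy at h
      simp only [List.map_nil, List.sum_nil] at h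
      have := congrArg Prod.snd h
      simp at this
      simp [← this]
    | cons s t ih =>
      unfold IsDelannoy at h
      simp only [List.map_cons, List.sum_cons] at h
      have h1 := congrArg Prod.fst h
      have h2 := congrArg Prod.snd h
      simp only [Prod.fst_add, Prod.snd_add] at h1 h2
      cases s with
      | N =>
        simp only [stepVec] at h1 h2
        have hz : ((t.map stepVec).sum).1 = 0 := by omega
        have ht : IsDelannoy 0 ((t.map stepVec).sum).2 t := by
          unfold IsDelannoy; rw [← hz]
        have h4 := ih ht
        rw [h4]
        have h5 : q = ((t.map stepVec).sum).2 + 1 := by omega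
        rw [h5, List.replicate_succ]
      | E => simp [stepVec] at h1
      | D => simp [stepVec] at h1
  · rintro rfl
    induction q with
    | zero => unfold IsDelannoy; simp; rfl
    | succ n ih =>
      unfold IsDelannoy at ih ⊢
      simp only [List.replicate_succ, List.map_cons, List.sum_cons, ih]
      simp only [stepVec, Prod.ext_iff, Prod.fst_add, Prod.snd_add]
      constructor <;> simp [Nat.add_comm]

lemma weight_replicate_E (k : ℕ) : weight (List.replicate k DStep.E) = 1 := by
  suffices h : ∀ ab, weightFrom ab (List.replicate k DStep.E) = 1 from h _
  induction k with
  | zero => intro ab; simp [weightFrom]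
  | succ n ih => intro ab; simp [List.replicate_succ, weightFrom, ih]

lemma weight_replicate_N (k : ℕ) : weight (List.replicate k DStep.N) = 1 := by
  suffices h : ∀ ab, weightFrom ab (List.replicate k DStep.N) = 1 from h _
  induction k with
  | zero => intro ab; simp [weightFrom]
  | succ n ih => intro ab; simp [List.replicate_succ, weightFrom, ih]

lemma W_p0 (p : ℕ) : W p 0 = 1 := by
  unfold W
  have : Dset p 0 = {List.replicate p DStep.E} := by
    ext l; simp [mem_Dset, delannoy_p0]
  rw [this, Finset.sum_singleton, weight_replicate_E]

lemma W_0q (q : ℕ) : W 0 q = 1 := by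
  unfold W
  have : Dset 0 q = {List.replicate q DStep.N} := by
    ext l; simp [mem_Dset, delannoy_0q]
  rw [this, Finset.sum_singleton, weight_replicate_N]

lemma finsum_eq_W (p q : ℕ) :
    ∑ᶠ L : {l : List DStep // IsDelannoy p q l}, weight L.1 = W p q := by
  rw [finsum_subtype_eq_finsum_cond]
  have : ∑ᶠ (i : List DStep) (_ : IsDelannoy p q i), weight i = ∑ᶠ i ∈ {l | IsDelannoy p q l}, weight i := rfl
  rw [this]
  have h2 : {l | IsDelannoy p q l} = (Dset p q : Set (List DStep)) := by
    ext l; simp [mem_Dset]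
  rw [h2, finsum_mem_coe_finset]
  rfl


lemma acount_W_key (p : ℕ) : ∀ q : ℕ, acount (p + q) ((p : ℤ) - q) = W p q := by
  induction p with
  | zero =>
    intro q
    rw [W_0q]
    simp only [Nat.zero_add, Nat.cast_zero, zero_sub]
    exact acount_base_neg q
  | succ p ihp =>
    intro q
    induction q with
    | zero =>
      rw [W_p0]
      simp only [Nat.add_zero, Nat.cast_zero, sub_zero]
      exact_mod_cast acount_base_pos (p + 1)
    | succ q ihq =>
      have hn : p + 1 + (q + 1) = p + q + 2 := by omega
      have hd : ((p + 1 : ℕ) : ℤ) - ((q + 1 : ℕ) : ℤ) = (p : ℤ) - q := by push_cast; ring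
      rw [hn, hd]
      rw [acount_rec (p + q) ((p : ℤ) - q)]
      have e1 := ihp (q + 1)
      rw [show p + (q + 1) = p + q + 1 from by omega,
        show ((p : ℤ) - ((q + 1 : ℕ) : ℤ)) = (p : ℤ) - q - 1 from by push_cast; ring] at e1
      have e2 := ihq
      rw [show p + 1 + q = p + q + 1 from by omega,
        show (((p + 1 : ℕ) : ℤ) - (q : ℤ)) = (p : ℤ) - q + 1 from by push_cast; ring] at e2
      have e3 := ihp q
      rw [e1, e2, e3, W_rec]

theorem stmt8 (p q : ℕ) :
    alphaCount p q = ∑ᶠ L : {l : List DStep // IsDelannoy p q l}, weight L.1 := by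
  rw [finsum_eq_W]
  have h : alphaCount p q = acount (p + q) ((p : ℤ) - q) := rfl
  rw [h]
  exact acount_W_key p q
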